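/- Let q be a prime power and a, b positive integers. Then S_1(a)·S_1(b) - S_1(a+b), viewed as a polynomial in U = 1/[1] over F_p, has the property that every exponent i of U appearing with nonzero coefficient satisfies (a+b-i) ≡ 0 (mod q-1), and moreover every such exponent i is strictly less than a+b. -/

import Mathlib

open Polynomial Finset

noncomputable def PP (p q : ℕ) : ℕ → Polynomial (ZMod p)
  | 0 => 0
  | 1 => -Polynomial.X
  | (k+2) => -Polynomial.X * PP p q (k+1) +
      (if _h : 0 < q ∧ q < k + 2 then Polynomial.X * PP p q (k+2-q) else 0)
  termination_by k => k
  decreasing_by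
  · omega
  · omega

lemma PP_coeff_cond (p q : ℕ) (hq : 2 ≤ q) :
    ∀ k i, (PP p q k).coeff i ≠ 0 → 1 ≤ i ∧ i ≤ k ∧ (q-1) ∣ (k - i) := by
  intro k
  induction k using Nat.strong_induction_on with
  | _ k ih =>
    match k with
    | 0 => intro i h; simp [PP] at h
    | 1 =>
      intro i h
      rw [PP] at h
      rcases eq_or_ne i 1 with rfl | hi
      · exact ⟨le_refl 1, le_refl 1, by simp⟩
      · exfalso; apply h; simp [coeff_X, hi, Ne.symm hi]
    | (k+2) =>
      intro i h
      rw [PP, coeff_add] at h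
      by_cases hg : 0 < q ∧ q < k + 2
      · rw [dif_pos hg] at h
        match i with
        | 0 =>
          exfalso; apply h
          rw [neg_mul, coeff_neg, coeff_X_mul_zero, neg_zero, zero_add]
          exact coeff_X_mul_zero _
        | (j+1) =>
          rw [neg_mul, coeff_neg, coeff_X_mul, coeff_X_mul] at h
          by_cases hc : (PP p q (k+1)).coeff j ≠ 0
          · obtain ⟨h2, h3, h4⟩ := ih (k+1) (by omega) j hc
            refine ⟨by omega, by omega, ?_⟩
            have heq : k + 2 - (j+1) = k + 1 - j := by omega
            rw [heq]; exact h4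
          · push_neg at hc
            rw [hc, neg_zero, zero_add] at h
            obtain ⟨h2, h3, h4⟩ := ih (k+2-q) (by omega) j h
            refine ⟨by omega, by omega, ?_⟩
            have heq : k + 2 - (j+1) = (k + 2 - q - j) + (q - 1) := by omega
            rw [heq]
            exact dvd_add h4 ⟨1, (mul_one _).symm⟩
      · rw [dif_neg hg] at h
        match i with
        | 0 =>
          exfalso; apply h
          rw [neg_mul, coeff_neg, coeff_X_mul_zero, neg_zero, zero_add]
          exact coeff_zero 0
        | (j+1) =>
          rw [neg_mul, coeff_neg, coeff_X_mul, coeff_zero, add_zero, neg_ne_zero] at h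
          obtain ⟨h2, h3, h4⟩ := ih (k+1) (by omega) j h
          refine ⟨by omega, by omega, ?_⟩
          have heq : k + 2 - (j+1) = k + 1 - j := by omega
          rw [heq]; exact h4

lemma PP_coeff_self (p q : ℕ) (hq : 2 ≤ q) :
    ∀ k, 1 ≤ k → (PP p q k).coeff k = (-1)^k := by
  intro k
  induction k using Nat.strong_induction_on with
  | _ k ih =>
    match k with
    | 0 => intro h0; omega
    | 1 => intro _; rw [PP]; simp
    | (k+2) =>
      intro _
      rw [PP, coeff_add, neg_mul, coeff_neg, coeff_X_mul]
      have h1 : (PP p q (k+1)).coeff (k+1) = (-1)^(k+1) := ih (k+1) (by omega) (by omega)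
      have h2 : (if _h : 0 < q ∧ q < k + 2 then Polynomial.X * PP p q (k+2-q) else 0).coeff (k+2) = 0 := by
        by_cases hg : 0 < q ∧ q < k + 2
        · rw [dif_pos hg, coeff_X_mul]
          by_contra hc
          have := (PP_coeff_cond p q hq (k+2-q) (k+1) hc).2.1
          omega
        · rw [dif_neg hg, coeff_zero]
      rw [h1, h2, add_zero, pow_succ]
      ring

section Aux
variable {K : Type} [Field K]

lemma aux_inv_split (h : K) (hne : h ≠ 0) (q k : ℕ) (hk : q < k) :
    (h^q - h) * ((h^k)⁻¹) = (h^(k-q))⁻¹ - (h^(k-1))⁻¹ := by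
  have h1 : h ^ q * (h^k)⁻¹ = (h^(k-q))⁻¹ := by
    field_simp
    rw [← pow_add]
    congr 1
    omega
  have h2 : h * (h^k)⁻¹ = (h^(k-1))⁻¹ := by
    field_simp
    rw [← pow_succ']
    congr 1
    omega
  rw [sub_mul, h1, h2]

lemma aux_inv_split2 (h : K) (hne : h ≠ 0) (q k : ℕ) (hk1 : 1 ≤ k) (hk : k ≤ q) :
    (h^q - h) * ((h^k)⁻¹) = h^(q-k) - (h^(k-1))⁻¹ := by
  have h1 : h ^ q * (h^k)⁻¹ = h^(q-k) := by
    field_simp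
    rw [← pow_add]
    congr 1
    omega
  have h2 : h * (h^k)⁻¹ = (h^(k-1))⁻¹ := by
    field_simp
    rw [← pow_succ']
    congr 1
    omega
  rw [sub_mul, h1, h2]

end Aux

section FieldSide
variable {F : Type} [Field F] [Fintype F]

lemma XqX_ne (q : ℕ) (hq2 : 2 ≤ q) : (RatFunc.X ^ q - RatFunc.X : RatFunc F) ≠ 0 := by
  have h1 : (RatFunc.X ^ q - RatFunc.X : RatFunc F)
      = algebraMap F[X] (RatFunc F) (Polynomial.X ^ q - Polynomial.X) := by
    rw [map_sub, map_pow, RatFunc.algebraMap_X]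
  rw [h1]
  apply RatFunc.algebraMap_ne_zero
  intro h
  have h2 := congrArg (fun f => Polynomial.coeff f q) h
  simp only [Polynomial.coeff_sub, Polynomial.coeff_X_pow, if_pos rfl, Polynomial.coeff_zero,
    Polynomial.coeff_X, if_neg (by omega : ¬q = 1)] at h2
  rw [if_neg (by omega : ¬(1:ℕ) = q)] at h2
  simp at h2

lemma Xθ_ne (θ : F) : (RatFunc.X + RatFunc.C θ : RatFunc F) ≠ 0 := by
  have h1 : (RatFunc.X + RatFunc.C θ : RatFunc F)
      = algebraMap F[X] (RatFunc F) (Polynomial.X + Polynomial.C θ) := by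
    rw [map_add, RatFunc.algebraMap_X, RatFunc.algebraMap_C]
  rw [h1]
  exact RatFunc.algebraMap_ne_zero (Polynomial.X_add_C_ne_zero θ)

lemma frob (p s q : ℕ) (hp : p.Prime) (hq : q = p ^ s) [CharP F p]
    (hF : Fintype.card F = q) (θ : F) :
    (RatFunc.X + RatFunc.C θ : RatFunc F) ^ q = RatFunc.X ^ q + RatFunc.C θ := by
  haveI := Fact.mk hp
  haveI : CharP (RatFunc F) p :=
    charP_of_injective_algebraMap (algebraMap F (RatFunc F)).injective p
  subst hq
  rw [add_pow_char_pow, ← map_pow]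
  congr 1
  congr 1
  rw [← hF]
  exact FiniteField.pow_card θ

lemma sum_vanish (p s q : ℕ) (hp : p.Prime) (hq : q = p ^ s) [CharP F p]
    (hF : Fintype.card F = q) (m : ℕ) (hm : m < q - 1) :
    ∑ θ : F, (RatFunc.X + RatFunc.C θ : RatFunc F) ^ m = 0 := by
  have h1 : ∀ θ : F, (RatFunc.X + RatFunc.C θ : RatFunc F) ^ m
      = ∑ r ∈ range (m+1),
          RatFunc.X ^ r * RatFunc.C (θ ^ (m - r)) * (Nat.choose m r : RatFunc F) := by
    intro θ
    rw [add_pow]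
    refine Finset.sum_congr rfl fun r _ => ?_
    rw [map_pow]
  calc ∑ θ : F, (RatFunc.X + RatFunc.C θ : RatFunc F) ^ m
      = ∑ θ : F, ∑ r ∈ range (m+1),
          RatFunc.X ^ r * RatFunc.C (θ ^ (m - r)) * (Nat.choose m r : RatFunc F) :=
        Finset.sum_congr rfl fun θ _ => h1 θ
    _ = ∑ r ∈ range (m+1), ∑ θ : F,
          RatFunc.X ^ r * RatFunc.C (θ ^ (m - r)) * (Nat.choose m r : RatFunc F) :=
        Finset.sum_comm
    _ = 0 := by
        refine Finset.sum_eq_zero fun r _ => ?_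
        rw [← Finset.sum_mul, ← Finset.mul_sum, ← map_sum]
        have : ∑ θ : F, θ ^ (m - r) = 0 := by
          apply FiniteField.sum_pow_lt_card_sub_one
          rw [hF]; omega
        rw [this, map_zero, mul_zero, zero_mul]

lemma sum_top (p s q : ℕ) (hp : p.Prime) (hs : 0 < s) (hq : q = p ^ s) [CharP F p]
    (hF : Fintype.card F = q) :
    ∑ θ : F, (RatFunc.X + RatFunc.C θ : RatFunc F) ^ (q - 1) = -1 := by
  have hq2 : 2 ≤ q := by
    have := Nat.one_lt_pow hs.ne' hp.one_lt
    omega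
  classical
  have hcard : ∑ θ : F, θ ^ (q - 1) = (-1 : F) := by
    have h0 : ∀ θ : F, θ ^ (q - 1) = if θ = 0 then 0 else 1 := by
      intro θ
      split
      · subst ‹θ = 0›; exact zero_pow (by omega)
      · rw [← hF]; exact FiniteField.pow_card_sub_one_eq_one θ ‹θ ≠ 0›
    rw [Finset.sum_congr rfl fun θ _ => h0 θ]
    have h2 : ∑ θ : F, (if θ = 0 then (0:F) else 1)
        = (∑ _θ : F, (1:F)) - ∑ θ : F, (if θ = 0 then (1:F) else 0) := by
      rw [← Finset.sum_sub_distrib]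
      refine Finset.sum_congr rfl fun θ _ => ?_
      split <;> ring
    rw [h2, Finset.sum_ite_eq' Finset.univ (0:F) (fun _ => (1:F)), if_pos (Finset.mem_univ _)]
    rw [Finset.sum_const, card_univ, hF]
    have : (q : F) = 0 := by
      rw [hq]
      push_cast
      rw [CharP.cast_eq_zero]
      exact zero_pow hs.ne'
    rw [nsmul_eq_mul, mul_one, this]
    ring
  have h1 : ∀ θ : F, (RatFunc.X + RatFunc.C θ : RatFunc F) ^ (q-1)
      = ∑ r ∈ range (q-1+1),
          RatFunc.X ^ r * RatFunc.C (θ ^ (q-1-r)) * (Nat.choose (q-1) r : RatFunc F) := by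
    intro θ
    rw [add_pow]
    refine Finset.sum_congr rfl fun r _ => ?_
    rw [map_pow]
  rw [Finset.sum_congr rfl fun θ _ => h1 θ, Finset.sum_comm]
  have hsplit : ∀ r ∈ range (q-1+1), (∑ θ : F,
      RatFunc.X ^ r * RatFunc.C (θ ^ (q-1-r)) * (Nat.choose (q-1) r : RatFunc F))
      = if r = 0 then -1 else 0 := by
    intro r hr
    rw [← Finset.sum_mul, ← Finset.mul_sum, ← map_sum]
    split
    · subst ‹r = 0›
      simp [hcard]
    · have : ∑ θ : F, θ ^ (q-1-r) = 0 := by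
        apply FiniteField.sum_pow_lt_card_sub_one
        rw [hF]
        rw [Finset.mem_range] at hr
        omega
      rw [this, map_zero, mul_zero, zero_mul]
  rw [Finset.sum_congr rfl hsplit]
  rw [Finset.sum_ite_eq' (range (q-1+1)) 0 (fun _ => (-1 : RatFunc F))]
  rw [if_pos (Finset.mem_range.mpr (by omega))]

end FieldSide

section More
variable {F : Type} [Field F] [Fintype F]

lemma q_cast_zero (p s q : ℕ) (hp : p.Prime) (hs : 0 < s) (hq : q = p ^ s) [CharP F p] :
    (q : RatFunc F) = 0 := by
  haveI : CharP (RatFunc F) p :=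
    charP_of_injective_algebraMap (algebraMap F (RatFunc F)).injective p
  rw [hq]
  push_cast
  rw [CharP.cast_eq_zero]
  exact zero_pow hs.ne'

lemma S_one (p s q : ℕ) (hp : p.Prime) (hs : 0 < s) (hq : q = p ^ s) [CharP F p]
    (hF : Fintype.card F = q) :
    ∑ θ : F, (RatFunc.X + RatFunc.C θ : RatFunc F)⁻¹ = -(RatFunc.X ^ q - RatFunc.X)⁻¹ := by
  have hq2 : 2 ≤ q := by
    have := Nat.one_lt_pow hs.ne' hp.one_lt
    omega
  have hg : (RatFunc.X ^ q - RatFunc.X : RatFunc F) ≠ 0 := XqX_ne q hq2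
  set g : RatFunc F := RatFunc.X ^ q - RatFunc.X with hgdef
  have key : ∀ θ : F, (RatFunc.X + RatFunc.C θ)⁻¹ * g
      = (RatFunc.X + RatFunc.C θ)^(q-1) - 1 := by
    intro θ
    have hθ := Xθ_ne θ
    have hgθ : g = (RatFunc.X + RatFunc.C θ)^q - (RatFunc.X + RatFunc.C θ) := by
      rw [hgdef, frob p s q hp hq hF θ]; ring
    rw [hgθ, mul_sub, inv_mul_cancel₀ hθ]
    congr 1
    have e2 : (RatFunc.X + RatFunc.C θ : RatFunc F)^q
        = (RatFunc.X + RatFunc.C θ) * (RatFunc.X + RatFunc.C θ)^(q-1) := by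
      rw [← pow_succ']
      congr 1
      omega
    rw [e2, ← mul_assoc, inv_mul_cancel₀ hθ, one_mul]
  have hAg : (∑ θ : F, (RatFunc.X + RatFunc.C θ : RatFunc F)⁻¹) * g = -1 := by
    rw [Finset.sum_mul]
    rw [Finset.sum_congr rfl fun θ _ => key θ]
    rw [Finset.sum_sub_distrib, sum_top p s q hp hs hq hF]
    rw [Finset.sum_const, card_univ, hF, nsmul_eq_mul, mul_one,
      q_cast_zero p s q hp hs hq]
    ring
  calc ∑ θ : F, (RatFunc.X + RatFunc.C θ : RatFunc F)⁻¹
      = (∑ θ : F, (RatFunc.X + RatFunc.C θ : RatFunc F)⁻¹) * g * g⁻¹ := by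
        rw [mul_assoc, mul_inv_cancel₀ hg, mul_one]
    _ = -g⁻¹ := by rw [hAg]; ring

lemma S_rec_big (p s q : ℕ) (hp : p.Prime) (hs : 0 < s) (hq : q = p ^ s) [CharP F p]
    (hF : Fintype.card F = q) (k : ℕ) (hk : q < k) :
    (RatFunc.X ^ q - RatFunc.X : RatFunc F) * ∑ θ : F, ((RatFunc.X + RatFunc.C θ)^k)⁻¹
      = (∑ θ : F, ((RatFunc.X + RatFunc.C θ : RatFunc F)^(k-q))⁻¹)
        - ∑ θ : F, ((RatFunc.X + RatFunc.C θ : RatFunc F)^(k-1))⁻¹ := by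
  rw [Finset.mul_sum, ← Finset.sum_sub_distrib]
  refine Finset.sum_congr rfl fun θ _ => ?_
  have hθ := Xθ_ne θ
  have hgθ : (RatFunc.X ^ q - RatFunc.X : RatFunc F)
      = (RatFunc.X + RatFunc.C θ)^q - (RatFunc.X + RatFunc.C θ) := by
    rw [frob p s q hp hq hF θ]; ring
  rw [hgθ]
  exact aux_inv_split _ hθ q k hk

lemma S_rec_small (p s q : ℕ) (hp : p.Prime) (hs : 0 < s) (hq : q = p ^ s) [CharP F p]
    (hF : Fintype.card F = q) (k : ℕ) (hk1 : 2 ≤ k) (hk : k ≤ q) :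
    (RatFunc.X ^ q - RatFunc.X : RatFunc F) * ∑ θ : F, ((RatFunc.X + RatFunc.C θ)^k)⁻¹
      = - ∑ θ : F, ((RatFunc.X + RatFunc.C θ : RatFunc F)^(k-1))⁻¹ := by
  have step : ∀ θ : F, (RatFunc.X ^ q - RatFunc.X : RatFunc F)
      * ((RatFunc.X + RatFunc.C θ)^k)⁻¹
      = (RatFunc.X + RatFunc.C θ)^(q-k) - ((RatFunc.X + RatFunc.C θ)^(k-1))⁻¹ := by
    intro θ
    have hθ := Xθ_ne θ
    have hgθ : (RatFunc.X ^ q - RatFunc.X : RatFunc F)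
        = (RatFunc.X + RatFunc.C θ)^q - (RatFunc.X + RatFunc.C θ) := by
      rw [frob p s q hp hq hF θ]; ring
    rw [hgθ]
    exact aux_inv_split2 _ hθ q k (by omega) hk
  rw [Finset.mul_sum, Finset.sum_congr rfl fun θ _ => step θ, Finset.sum_sub_distrib]
  rw [sum_vanish p s q hp hq hF (q-k) (by omega)]
  ring

end More

section Eval
variable {F : Type} [Field F] [Fintype F]

lemma S_eval (p s q : ℕ) (hp : p.Prime) (hs : 0 < s) (hq : q = p ^ s) [CharP F p]
    [CharP (RatFunc F) p] (hF : Fintype.card F = q) :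
    ∀ k, ∑ θ : F, ((RatFunc.X + RatFunc.C θ : RatFunc F)^k)⁻¹
      = Polynomial.eval₂ (ZMod.castHom (dvd_refl p) (RatFunc F))
          ((RatFunc.X^q - RatFunc.X : RatFunc F)⁻¹) (PP p q k) := by
  have hq2 : 2 ≤ q := by
    have := Nat.one_lt_pow hs.ne' hp.one_lt
    omega
  have hg : (RatFunc.X ^ q - RatFunc.X : RatFunc F) ≠ 0 := XqX_ne q hq2
  intro k
  induction k using Nat.strong_induction_on with
  | _ k ih =>
    match k with
    | 0 =>
      rw [PP, eval₂_zero]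
      simp only [pow_zero, inv_one, Finset.sum_const, card_univ, hF, nsmul_eq_mul, mul_one]
      exact q_cast_zero p s q hp hs hq
    | 1 =>
      rw [PP, eval₂_neg, eval₂_X]
      simp only [pow_one]
      exact S_one p s q hp hs hq hF
    | (k+2) =>
      rw [PP, eval₂_add, eval₂_mul, eval₂_neg, eval₂_X]
      by_cases hgu : q < k + 2
      · rw [dif_pos ⟨by omega, hgu⟩, eval₂_mul, eval₂_X,
          ← ih (k+1) (by omega), ← ih (k+2-q) (by omega)]
        have h7 := S_rec_big p s q hp hs hq hF (k+2) hgu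
        have heq1 : (k + 2 - 1) = k + 1 := by omega
        rw [heq1] at h7
        calc ∑ θ : F, ((RatFunc.X + RatFunc.C θ : RatFunc F)^(k+2))⁻¹
            = (RatFunc.X^q - RatFunc.X : RatFunc F)⁻¹
              * ((RatFunc.X^q - RatFunc.X)
                 * ∑ θ : F, ((RatFunc.X + RatFunc.C θ : RatFunc F)^(k+2))⁻¹) := by
              rw [← mul_assoc, inv_mul_cancel₀ hg, one_mul]
          _ = _ := by rw [h7]; ring
      · rw [dif_neg (by omega : ¬(0 < q ∧ q < k + 2)), eval₂_zero,
          ← ih (k+1) (by omega)]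
        have h7 := S_rec_small p s q hp hs hq hF (k+2) (by omega) (by omega)
        have heq1 : (k + 2 - 1) = k + 1 := by omega
        rw [heq1] at h7
        calc ∑ θ : F, ((RatFunc.X + RatFunc.C θ : RatFunc F)^(k+2))⁻¹
            = (RatFunc.X^q - RatFunc.X : RatFunc F)⁻¹
              * ((RatFunc.X^q - RatFunc.X)
                 * ∑ θ : F, ((RatFunc.X + RatFunc.C θ : RatFunc F)^(k+2))⁻¹) := by
              rw [← mul_assoc, inv_mul_cancel₀ hg, one_mul]
          _ = _ := by rw [h7]; ring

end Eval



/-- `S_1(a)S_1(b) - S_1(a+b)`, as a polynomial in `U = 1/[1]` with `F_p`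
coefficients, has all exponents `i` (with nonzero coefficient) satisfying `i < a+b` and
`(q-1) ∣ (a+b-i)`. -/
theorem stmt_6 (p s q : ℕ) (hp : p.Prime) (hs : 0 < s) (hq : q = p ^ s)
    {F : Type} [Field F] [Fintype F] [CharP F p] (hF : Fintype.card F = q)
    (a b : ℕ) (ha : 1 ≤ a) (hb : 1 ≤ b) :
    ∃ c : ℕ → ZMod p,
      (∀ i, c i ≠ 0 → i < a + b ∧ (q - 1) ∣ (a + b - i)) ∧
      (∑ θ : F, ((RatFunc.X + RatFunc.C θ) ^ a)⁻¹) *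
          (∑ θ : F, ((RatFunc.X + RatFunc.C θ) ^ b)⁻¹) -
          (∑ θ : F, ((RatFunc.X + RatFunc.C θ) ^ (a + b))⁻¹) =
        ∑ i ∈ Finset.range (a + b),
          algebraMap F (RatFunc F) (ZMod.castHom (dvd_refl p) F (c i)) *
            ((RatFunc.X ^ q - RatFunc.X)⁻¹) ^ i := by
  haveI := Fact.mk hp
  haveI : CharP (RatFunc F) p :=
    charP_of_injective_algebraMap (algebraMap F (RatFunc F)).injective p
  have hq2 : 2 ≤ q := by
    have := Nat.one_lt_pow hs.ne' hp.one_lt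
    omega
  set Q : Polynomial (ZMod p) := PP p q a * PP p q b - PP p q (a+b) with hQ
  have htop : ∀ i, a + b ≤ i → Q.coeff i = 0 := by
    intro i hi
    rw [hQ, coeff_sub, coeff_mul]
    rcases eq_or_lt_of_le hi with rfl | hlt
    · rw [Finset.sum_eq_single ((a, b) : ℕ × ℕ)]
      · rw [PP_coeff_self p q hq2 a ha, PP_coeff_self p q hq2 b hb,
          PP_coeff_self p q hq2 (a+b) (by omega), ← pow_add, sub_self]
      · intro x hx hne
        rw [Finset.HasAntidiagonal.mem_antidiagonal] at hx
        by_cases h1 : (PP p q a).coeff x.1 = 0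
        · rw [h1, zero_mul]
        · have hb1 := (PP_coeff_cond p q hq2 a x.1 h1).2.1
          by_cases h2 : (PP p q b).coeff x.2 = 0
          · rw [h2, mul_zero]
          · have hb2 := (PP_coeff_cond p q hq2 b x.2 h2).2.1
            exfalso
            apply hne
            have hx1 : x.1 = a := by omega
            have hx2 : x.2 = b := by omega
            exact Prod.ext hx1 hx2
      · intro hmem; exact (hmem (by simp)).elim
    · have hmul : ∑ x ∈ Finset.HasAntidiagonal.antidiagonal i,
          (PP p q a).coeff x.1 * (PP p q b).coeff x.2 = 0 := by
        refine Finset.sum_eq_zero fun x hx => ?_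
        rw [Finset.HasAntidiagonal.mem_antidiagonal] at hx
        by_cases h1 : (PP p q a).coeff x.1 = 0
        · rw [h1, zero_mul]
        · have hb1 := (PP_coeff_cond p q hq2 a x.1 h1).2.1
          have h2 : (PP p q b).coeff x.2 = 0 := by
            by_contra h2
            have := (PP_coeff_cond p q hq2 b x.2 h2).2.1
            omega
          rw [h2, mul_zero]
      have h3 : (PP p q (a+b)).coeff i = 0 := by
        by_contra h3
        have := (PP_coeff_cond p q hq2 (a+b) i h3).2.1
        omega
      rw [hmul, h3, sub_self]
  refine ⟨fun i => Q.coeff i, ?_, ?_⟩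
  · intro i hne
    have hilt : i < a + b := by
      by_contra hcon
      exact hne (htop i (by omega))
    refine ⟨hilt, ?_⟩
    have hne' : (PP p q a * PP p q b).coeff i - (PP p q (a+b)).coeff i ≠ 0 := by
      simpa [hQ, coeff_sub] using hne
    have hor : (PP p q a * PP p q b).coeff i ≠ 0 ∨ (PP p q (a+b)).coeff i ≠ 0 := by
      by_contra hc
      push_neg at hc
      exact hne' (by rw [hc.1, hc.2, sub_self])
    rcases hor with h | h
    · rw [coeff_mul] at h
      obtain ⟨x, hx, hxne⟩ := Finset.exists_ne_zero_of_sum_ne_zero h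
      rw [Finset.HasAntidiagonal.mem_antidiagonal] at hx
      have h1 : (PP p q a).coeff x.1 ≠ 0 := fun hz => hxne (by rw [hz, zero_mul])
      have h2 : (PP p q b).coeff x.2 ≠ 0 := fun hz => hxne (by rw [hz, mul_zero])
      obtain ⟨_, ha1, ha2⟩ := PP_coeff_cond p q hq2 a x.1 h1
      obtain ⟨_, hb1, hb2⟩ := PP_coeff_cond p q hq2 b x.2 h2
      have heq : a + b - i = (a - x.1) + (b - x.2) := by omega
      rw [heq]
      exact dvd_add ha2 hb2
    · exact (PP_coeff_cond p q hq2 (a+b) i h).2.2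
  · rw [S_eval p s q hp hs hq hF a, S_eval p s q hp hs hq hF b,
      S_eval p s q hp hs hq hF (a+b), ← eval₂_mul, ← eval₂_sub, ← hQ]
    have hdeg : Q.natDegree < a + b := by
      rcases eq_or_ne Q 0 with h0 | h0
      · rw [h0, natDegree_zero]; omega
      · rw [natDegree_lt_iff_degree_lt h0]
        exact (degree_lt_iff_coeff_zero Q (a+b)).mpr fun m hm => htop m hm
    rw [eval₂_eq_sum_range' _ hdeg]
    refine Finset.sum_congr rfl fun i _ => ?_
    congr 1
    have hcomp : (algebraMap F (RatFunc F)).comp (ZMod.castHom (dvd_refl p) F)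
        = ZMod.castHom (dvd_refl p) (RatFunc F) := RingHom.ext_zmod _ _
    exact (RingHom.congr_fun hcomp _).symm
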